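/- Let q be an even prime power, let n and m be positive integers with m > n, and let 𝓔 be an egg in a (2n+m)-dimensional vector space V over the finite field F with exactly q elements. If an element E ∈ 𝓔 induces a partial spread which extends to a Desarguesian spread of V/E, then 𝓔 is good at E. -/

import Mathlib

open Submodule Module

structure FieldStructureOn (q n : ℕ) (F : Type*) [Field F]
    (W : Type*) [AddCommGroup W] [Module F W] where
  K : Type
  [fieldK : Field K]
  [fintypeK : Fintype K]
  [algFK : Algebra F K]
  [modKW : Module K W]
  card_K : Fintype.card K = q ^ n
  compat : ∀ (a : F) (w : W), (algebraMap F K a) • w = a • w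

namespace FieldStructureOn

variable {q n : ℕ} {F : Type*} [Field F] {W : Type*} [AddCommGroup W] [Module F W]

def line (fs : FieldStructureOn q n F W) (w : W) : Set W :=
  letI := fs.fieldK
  letI := fs.modKW
  Set.range fun c : fs.K => c • w

/-- `O` is the set of `K`-lines of zeros of a nondegenerate quadratic form over `K`. -/
def ConicWitness (fs : FieldStructureOn q n F W) (O : Set (Submodule F W)) : Prop :=
  letI := fs.fieldK
  letI := fs.modKW
  ∃ Q : QuadraticForm fs.K W,
    (∀ x : W, (∀ y : W, Q (x + y) - Q x - Q y = 0) → x = 0) ∧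
    O = {X : Submodule F W | ∃ w : W, w ≠ 0 ∧ Q w = 0 ∧ (X : Set W) = fs.line w}

/-- `𝓔` is the set of `K`-lines of zeros of a nondegenerate quadratic form over `K`
admitting no totally singular `2`-dimensional `K`-subspace (an elliptic quadric). -/
def EllipticWitness (fs : FieldStructureOn q n F W) (𝓔 : Set (Submodule F W)) : Prop :=
  letI := fs.fieldK
  letI := fs.modKW
  ∃ Q : QuadraticForm fs.K W,
    (∀ x : W, (∀ y : W, Q (x + y) - Q x - Q y = 0) → x = 0) ∧
    (∀ U : Submodule fs.K W, Module.finrank fs.K U = 2 → ¬ ∀ w ∈ U, Q w = 0) ∧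
    𝓔 = {X : Submodule F W | ∃ w : W, w ≠ 0 ∧ Q w = 0 ∧ (X : Set W) = fs.line w}

end FieldStructureOn

def IsDesarguesianSpread (q n : ℕ) {F : Type*} [Field F]
    {W : Type*} [AddCommGroup W] [Module F W] (S : Set (Submodule F W)) : Prop :=
  ∃ fs : FieldStructureOn q n F W,
    S = {X : Submodule F W | ∃ w : W, w ≠ 0 ∧ (X : Set W) = fs.line w}

/-- `S`, a set of subspaces of `V` contained in `P`, is a Desarguesian spread of `P`
regarded as an `F`-vector space in its own right. -/
def IsDesarguesianSpreadIn (q n : ℕ) {F : Type*} [Field F]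
    {V : Type*} [AddCommGroup V] [Module F V]
    (P : Submodule F V) (S : Set (Submodule F V)) : Prop :=
  (∀ X ∈ S, X ≤ P) ∧
  IsDesarguesianSpread q n ((fun Y : Submodule F V => Y.comap P.subtype) '' S)

/-- A pseudo-cap: a set of `n`-dimensional subspaces, any three distinct members of
which span a subspace of dimension `3n`. -/
def IsPseudoCap (n : ℕ) {F : Type*} [Field F]
    {V : Type*} [AddCommGroup V] [Module F V] (C : Set (Submodule F V)) : Prop :=
  (∀ E ∈ C, finrank F E = n) ∧
  ∀ E₁ ∈ C, ∀ E₂ ∈ C, ∀ E₃ ∈ C,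
    E₁ ≠ E₂ → E₁ ≠ E₃ → E₂ ≠ E₃ → finrank F ↥(E₁ ⊔ E₂ ⊔ E₃) = 3 * n

/-- A weak egg: a pseudo-cap of size `q ^ m + 1`. -/
def IsWeakEgg (q n m : ℕ) {F : Type*} [Field F]
    {V : Type*} [AddCommGroup V] [Module F V] (𝓔 : Set (Submodule F V)) : Prop :=
  IsPseudoCap n 𝓔 ∧ 𝓔.ncard = q ^ m + 1

/-- An egg: a weak egg each of whose elements has a tangent space. -/
def IsEgg (q n m : ℕ) {F : Type*} [Field F]
    {V : Type*} [AddCommGroup V] [Module F V] (𝓔 : Set (Submodule F V)) : Prop :=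
  IsWeakEgg q n m 𝓔 ∧
  ∀ E ∈ 𝓔, ∃ T : Submodule F V, finrank F T = n + m ∧ E ≤ T ∧
    ∀ E' ∈ 𝓔, E' ≠ E → T ⊓ E' = ⊥

/-- A weak egg `𝓔` is good at `E` if every `3n`-dimensional subspace containing `E`
and at least two other elements of `𝓔` contains exactly `q ^ n + 1` elements of `𝓔`. -/
def IsGoodAt (q n : ℕ) {F : Type*} [Field F]
    {V : Type*} [AddCommGroup V] [Module F V]
    (𝓔 : Set (Submodule F V)) (E : Submodule F V) : Prop :=
  ∀ W : Submodule F V, finrank F W = 3 * n → E ≤ W →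
    (∃ E₁ ∈ 𝓔, ∃ E₂ ∈ 𝓔, E₁ ≠ E ∧ E₂ ≠ E ∧ E₁ ≠ E₂ ∧ E₁ ≤ W ∧ E₂ ≤ W) →
    {E' ∈ 𝓔 | E' ≤ W}.ncard = q ^ n + 1

/-- `E` induces (in `V ⧸ E`) a partial spread which extends to a Desarguesian spread. -/
def InducesDesarguesian (q n : ℕ) {F : Type*} [Field F]
    {V : Type*} [AddCommGroup V] [Module F V]
    (𝓒 : Set (Submodule F V)) (E : Submodule F V) : Prop :=
  ∃ D : Set (Submodule F (V ⧸ E)), IsDesarguesianSpread q n D ∧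
    ∀ E' ∈ 𝓒, E' ≠ E → E'.map E.mkQ ∈ D

/-- A pseudo-cap is elementary if it is contained in a Desarguesian spread,
i.e. every element is a `K`-line for a compatible `K`-structure on `V`. -/
def IsElementary (q n : ℕ) {F : Type*} [Field F]
    {V : Type*} [AddCommGroup V] [Module F V] (𝓒 : Set (Submodule F V)) : Prop :=
  ∃ fs : FieldStructureOn q n F V, ∀ X ∈ 𝓒, ∃ w : V, w ≠ 0 ∧ (X : Set V) = fs.line w

/-- `O` is a pseudo-conic in the `3n`-dimensional space `W`. -/
def IsPseudoConic (q n : ℕ) {F : Type*} [Field F]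
    {W : Type*} [AddCommGroup W] [Module F W] (O : Set (Submodule F W)) : Prop :=
  ∃ fs : FieldStructureOn q n F W, fs.ConicWitness O

/-- `O`, a set of subspaces of `V` contained in `W`, is a pseudo-conic in `W`. -/
def IsPseudoConicIn (q n : ℕ) {F : Type*} [Field F]
    {V : Type*} [AddCommGroup V] [Module F V]
    (W : Submodule F V) (O : Set (Submodule F V)) : Prop :=
  (∀ X ∈ O, X ≤ W) ∧
  IsPseudoConic q n ((fun Y : Submodule F V => Y.comap W.subtype) '' O)

/-- A weak egg in a `4n`-dimensional space is classical if it is the field reduction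
of an elliptic quadric of `PG(3, q^n)`. -/
def IsClassical (q n : ℕ) {F : Type*} [Field F]
    {V : Type*} [AddCommGroup V] [Module F V] (𝓔 : Set (Submodule F V)) : Prop :=
  ∃ fs : FieldStructureOn q n F V, fs.EllipticWitness 𝓔

/-- `C`, a set of subspaces of `V` contained in `W`, is elementary inside `W`. -/
def IsElementaryIn (q n : ℕ) {F : Type*} [Field F]
    {V : Type*} [AddCommGroup V] [Module F V]
    (W : Submodule F V) (C : Set (Submodule F V)) : Prop :=
  (∀ X ∈ C, X ≤ W) ∧
  ∃ fs : FieldStructureOn q n F ↥W,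
    ∀ X ∈ C, ∃ w : ↥W, w ≠ 0 ∧ ((X.comap W.subtype : Submodule F ↥W) : Set ↥W) = fs.line w

/-- For `q` even: if an element `E` of an egg induces a partial spread which
extends to a Desarguesian spread of `V ⧸ E`, then the egg is good at `E`. -/
private lemma aux_finrank_map_add {F V Q : Type*} [Field F] [AddCommGroup V] [Module F V]
    [AddCommGroup Q] [Module F Q] [FiniteDimensional F V]
    (f : V →ₗ[F] Q) (X : Submodule F V) :
    finrank F (X.map f) + finrank F ↥(X ⊓ LinearMap.ker f) = finrank F X := by
  have h := LinearMap.finrank_range_add_finrank_ker (f ∘ₗ X.subtype)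
  rw [LinearMap.range_comp, Submodule.range_subtype] at h
  have hker : LinearMap.ker (f ∘ₗ X.subtype) =
      Submodule.comap X.subtype (X ⊓ LinearMap.ker f) := by
    ext x
    simp [LinearMap.mem_ker]
  rw [hker, (Submodule.comapSubtypeEquivOfLe (inf_le_left :
    X ⊓ LinearMap.ker f ≤ X)).finrank_eq] at h
  exact h

private lemma aux_card_submodule {F M : Type*} [Field F] [Fintype F] [AddCommGroup M]
    [Module F M] [Finite M] (X : Submodule F M) :
    (X : Set M).ncard = Fintype.card F ^ finrank F X := by
  haveI : Fintype M := Fintype.ofFinite M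
  haveI : Fintype X := Fintype.ofFinite X
  have h1 : (X : Set M).ncard = Nat.card X := (Nat.card_coe_set_eq _).symm
  rw [h1, Nat.card_eq_fintype_card, card_eq_pow_finrank (K := F)]

private lemma aux_ncard_biUnion {α β : Type*} {I : Set β} (hI : I.Finite) (f : β → Set α) (c : ℕ) :
    I.Pairwise (fun b b' => Disjoint (f b) (f b')) → (∀ b ∈ I, (f b).Finite) →
    (∀ b ∈ I, (f b).ncard = c) → (⋃ b ∈ I, f b).ncard = I.ncard * c := by
  refine Set.Finite.induction_on (motive := fun I _ => I.Pairwise (fun b b' => Disjoint (f b) (f b')) → (∀ b ∈ I, (f b).Finite) →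
      (∀ b ∈ I, (f b).ncard = c) → (⋃ b ∈ I, f b).ncard = I.ncard * c) I hI (by simp) ?_
  intro a s ha hs ih hd hfin hc
  rw [Set.biUnion_insert]
  have hdfa : Disjoint (f a) (⋃ b ∈ s, f b) := by
    rw [Set.disjoint_iUnion₂_right]
    intro b hb
    exact hd (Set.mem_insert a s) (Set.mem_insert_of_mem _ hb) (fun h => ha (h ▸ hb))
  have hfins : (⋃ b ∈ s, f b).Finite :=
    Set.Finite.biUnion hs (fun b hb => hfin b (Set.mem_insert_of_mem _ hb))
  rw [Set.ncard_union_eq hdfa (hfin a (Set.mem_insert a s)) hfins,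
    ih (hd.mono (Set.subset_insert a s)) (fun b hb => hfin b (Set.mem_insert_of_mem _ hb))
      (fun b hb => hc b (Set.mem_insert_of_mem _ hb)),
    hc a (Set.mem_insert a s), Set.ncard_insert_of_notMem ha hs]
  ring

theorem stmt_4 (q n m : ℕ) (hq : IsPrimePow q) (heven : Even q) (hn : 0 < n) (hm : n < m)
    (F : Type*) [Field F] [Fintype F] (hF : Fintype.card F = q)
    (V : Type*) [AddCommGroup V] [Module F V] (hV : finrank F V = 2 * n + m)
    (𝓔 : Set (Submodule F V)) (h𝓔 : IsEgg q n m 𝓔)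
    (E : Submodule F V) (hE : E ∈ 𝓔) (hdes : InducesDesarguesian q n 𝓔 E) :
    IsGoodAt q n 𝓔 E := by
  classical
  have hq2 : 2 ≤ q := hq.two_le
  have hqn1 : 1 < q ^ n :=
    lt_of_lt_of_le (Nat.one_lt_two_pow (by omega)) (Nat.pow_le_pow_left hq2 n)
  have hqm1 : 1 < q ^ m :=
    lt_of_lt_of_le (Nat.one_lt_two_pow (by omega)) (Nat.pow_le_pow_left hq2 m)
  haveI hVfd : FiniteDimensional F V := FiniteDimensional.of_finrank_pos (by omega)
  haveI : Finite V := Module.finite_of_finite F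
  haveI : Finite (V ⧸ E) := Finite.of_surjective _ (Submodule.mkQ_surjective E)
  haveI : Finite (Submodule F V) := Finite.of_injective _ SetLike.coe_injective
  obtain ⟨⟨⟨hdim, hspan3⟩, hcard⟩, htangent⟩ := h𝓔
  -- a third element
  have hthird : ∀ A B : Submodule F V, ∃ C ∈ 𝓔, C ≠ A ∧ C ≠ B := by
    intro A B
    by_contra h
    push_neg at h
    have hsub : 𝓔 ⊆ {A, B} := by
      intro X hX
      by_cases h1 : X = A
      · simp [h1]
      · simp [h X hX h1]
    have h2 := Set.ncard_le_ncard hsub (Set.toFinite _)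
    have h3 : ({A, B} : Set (Submodule F V)).ncard ≤ 2 :=
      le_trans (Set.ncard_insert_le _ _) (by simp)
    rw [hcard] at h2
    omega
  -- pairwise trivial intersections
  have hsup2 : ∀ E₁ ∈ 𝓔, ∀ E₂ ∈ 𝓔, E₁ ≠ E₂ →
      finrank F ↥(E₁ ⊔ E₂) = 2 * n ∧ E₁ ⊓ E₂ = ⊥ := by
    intro E₁ h₁ E₂ h₂ hne
    obtain ⟨C, hC, hCA, hCB⟩ := hthird E₁ E₂
    have h3 := hspan3 E₁ h₁ E₂ h₂ C hC hne (Ne.symm hCA) (Ne.symm hCB)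
    have h4 := Submodule.finrank_sup_add_finrank_inf_eq (E₁ ⊔ E₂) C
    have h5 := Submodule.finrank_sup_add_finrank_inf_eq E₁ E₂
    have h6 : finrank F ↥(E₁ ⊔ E₂) ≤ finrank F ↥E₁ + finrank F ↥E₂ := by omega
    rw [hdim E₁ h₁, hdim E₂ h₂] at h5 h6
    rw [hdim C hC, h3] at h4
    have h7 : finrank F ↥(E₁ ⊓ E₂) = 0 := by omega
    exact ⟨by omega, Submodule.finrank_eq_zero.mp h7⟩
  have hpair : ∀ E₁ ∈ 𝓔, ∀ E₂ ∈ 𝓔, E₁ ≠ E₂ → E₁ ⊓ E₂ = ⊥ :=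
    fun E₁ h₁ E₂ h₂ hne => (hsup2 E₁ h₁ E₂ h₂ hne).2
  have hdisj12 : ∀ E₁ ∈ 𝓔, ∀ E₂ ∈ 𝓔, ∀ E₃ ∈ 𝓔, E₁ ≠ E₂ → E₁ ≠ E₃ → E₂ ≠ E₃ →
      E₁ ⊓ (E₂ ⊔ E₃) = ⊥ := by
    intro E₁ h₁ E₂ h₂ E₃ h₃ h12 h13 h23
    have h3 := hspan3 E₁ h₁ E₂ h₂ E₃ h₃ h12 h13 h23
    rw [sup_assoc] at h3
    have h4 := Submodule.finrank_sup_add_finrank_inf_eq E₁ (E₂ ⊔ E₃)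
    rw [h3, hdim E₁ h₁, (hsup2 E₂ h₂ E₃ h₃ h23).1] at h4
    exact Submodule.finrank_eq_zero.mp (by omega)
  -- the Desarguesian spread data
  obtain ⟨D, ⟨fs, hDeq⟩, hmemD⟩ := hdes
  letI : Field fs.K := fs.fieldK
  letI : Fintype fs.K := fs.fintypeK
  letI : Module fs.K (V ⧸ E) := fs.modKW
  have hline_mem : ∀ (w v : V ⧸ E), v ∈ fs.line w ↔ ∃ c : fs.K, c • w = v :=
    fun w v => Iff.rfl
  have hinv : ∀ (c : fs.K) (v : V ⧸ E), c ≠ 0 → c⁻¹ • (c • v) = v :=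
    fun c v hc => inv_smul_smul₀ hc v
  have hD_line : ∀ X ∈ D, ∃ w : V ⧸ E, w ≠ 0 ∧ (X : Set (V ⧸ E)) = fs.line w := by
    rw [hDeq]
    exact fun X hX => hX
  -- dimensions
  have hEn : finrank F ↥E = n := hdim E hE
  have hQdim : finrank F (V ⧸ E) = n + m := by
    have h := Submodule.finrank_quotient_add_finrank E
    omega
  have himg_dim : ∀ E' ∈ 𝓔, E' ≠ E → finrank F ↥(E'.map E.mkQ) = n := by
    intro E' h1 h2
    have h := aux_finrank_map_add E.mkQ E'
    rw [Submodule.ker_mkQ, hpair E' h1 E hE h2, finrank_bot, hdim E' h1] at h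
    omega
  have himg_card : ∀ E' ∈ 𝓔, E' ≠ E → ((E'.map E.mkQ : Submodule F (V ⧸ E)) : Set (V ⧸ E)).ncard = q ^ n := by
    intro E' h1 h2
    rw [aux_card_submodule, hF, himg_dim E' h1 h2]
  -- the tangent space at E
  obtain ⟨T, hTdim, hET, hTdisj⟩ := htangent E hE
  have hT'dim : finrank F ↥(T.map E.mkQ) = m := by
    have h := aux_finrank_map_add E.mkQ T
    rw [Submodule.ker_mkQ, inf_eq_right.mpr hET] at h
    omega
  have hT'card : ((T.map E.mkQ : Submodule F (V ⧸ E)) : Set (V ⧸ E)).ncard = q ^ m := by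
    rw [aux_card_submodule, hF, hT'dim]
  have himg_disj_T : ∀ E' ∈ 𝓔, E' ≠ E → (E'.map E.mkQ) ⊓ (T.map E.mkQ) = ⊥ := by
    intro E' h1 h2
    rw [eq_bot_iff]
    rintro v ⟨hv1, hv2⟩
    obtain ⟨x, hx, rfl⟩ := hv1
    obtain ⟨t, ht, hxt⟩ := hv2
    have hxE : t - x ∈ E := by
      rw [← Submodule.ker_mkQ E, LinearMap.mem_ker, map_sub, hxt, sub_self]
    have hxT : x ∈ T := by
      rw [← sub_sub_cancel t x]
      exact T.sub_mem ht (hET hxE)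
    have : x ∈ T ⊓ E' := ⟨hxT, hx⟩
    rw [hTdisj E' h1 h2] at this
    simp only [Submodule.mem_bot] at this
    simp [this]
  have himg_disj : ∀ E₁ ∈ 𝓔, ∀ E₂ ∈ 𝓔, E₁ ≠ E → E₂ ≠ E → E₁ ≠ E₂ →
      (E₁.map E.mkQ) ⊓ (E₂.map E.mkQ) = ⊥ := by
    intro E₁ h₁ E₂ h₂ h1E h2E h12
    rw [eq_bot_iff]
    rintro v ⟨hv1, hv2⟩
    obtain ⟨x₁, hx₁, rfl⟩ := hv1
    obtain ⟨x₂, hx₂, hx⟩ := hv2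
    have hsub : x₂ - x₁ ∈ E := by
      rw [← Submodule.ker_mkQ E, LinearMap.mem_ker, map_sub, hx, sub_self]
    have hsub2 : x₂ - x₁ ∈ E₂ ⊔ E₁ := Submodule.sub_mem _
      (Submodule.mem_sup_left hx₂) (Submodule.mem_sup_right hx₁)
    have h0 : x₂ - x₁ ∈ E ⊓ (E₂ ⊔ E₁) := ⟨hsub, hsub2⟩
    rw [hdisj12 E hE E₂ h₂ E₁ h₁ (Ne.symm h2E) (Ne.symm h1E) (Ne.symm h12)] at h0
    simp only [Submodule.mem_bot] at h0
    have hx12 : x₂ = x₁ := by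
      have := sub_eq_zero.mp h0
      exact this
    have : x₁ ∈ E₁ ⊓ E₂ := ⟨hx₁, hx12 ▸ hx₂⟩
    rw [hpair E₁ h₁ E₂ h₂ h12] at this
    simp only [Submodule.mem_bot] at this
    simp [this]
  -- finiteness of the egg
  have hEfin : 𝓔.Finite := Set.toFinite _
  have hIcard : (𝓔 \ {E}).ncard = q ^ m := by
    rw [Set.ncard_diff_singleton_of_mem hE, hcard]
    omega
  -- cardinality of the quotient
  have cardQ : Nat.card (V ⧸ E) = q ^ (n + m) := by
    haveI : Fintype (V ⧸ E) := Fintype.ofFinite (V ⧸ E)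
    rw [Nat.card_eq_fintype_card, card_eq_pow_finrank (K := F), hF, hQdim]
  -- the covering property: every nonzero vector lies in T' or in some egg image
  have hcover : ∀ v : V ⧸ E, v ∉ T.map E.mkQ → v ≠ 0 →
      ∃ E' ∈ 𝓔, E' ≠ E ∧ v ∈ E'.map E.mkQ := by
    have hU : ((T.map E.mkQ : Submodule F (V ⧸ E)) : Set (V ⧸ E)) ∪
        (⋃ E' ∈ 𝓔 \ {E}, ((E'.map E.mkQ : Submodule F (V ⧸ E)) : Set (V ⧸ E)) \ {0})
        = Set.univ := by
      apply Set.eq_of_subset_of_ncard_le (Set.subset_univ _) _ (Set.toFinite _)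
      have hd : Disjoint ((T.map E.mkQ : Submodule F (V ⧸ E)) : Set (V ⧸ E))
          (⋃ E' ∈ 𝓔 \ {E}, ((E'.map E.mkQ : Submodule F (V ⧸ E)) : Set (V ⧸ E)) \ {0}) := by
        rw [Set.disjoint_iUnion₂_right]
        intro E' hE'
        rw [Set.disjoint_left]
        rintro v hvT ⟨hvE', hv0⟩
        have h' : E' ∈ 𝓔 ∧ E' ≠ E := by simpa using hE'
        have : v ∈ (E'.map E.mkQ) ⊓ (T.map E.mkQ) := ⟨hvE', hvT⟩
        rw [himg_disj_T E' h'.1 h'.2] at this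
        exact hv0 (by simpa using this)
      have hbu : (⋃ E' ∈ 𝓔 \ {E}, ((E'.map E.mkQ : Submodule F (V ⧸ E)) : Set (V ⧸ E)) \ {0}).ncard
          = q ^ m * (q ^ n - 1) := by
        rw [← hIcard]
        apply aux_ncard_biUnion hEfin.diff _ _
        · intro E₁ h₁ E₂ h₂ hne
          rw [Set.disjoint_left]
          rintro v ⟨hv1, hv10⟩ ⟨hv2, _⟩
          have h₁' : E₁ ∈ 𝓔 ∧ E₁ ≠ E := by simpa using h₁
          have h₂' : E₂ ∈ 𝓔 ∧ E₂ ≠ E := by simpa using h₂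
          have : v ∈ (E₁.map E.mkQ) ⊓ (E₂.map E.mkQ) := ⟨hv1, hv2⟩
          rw [himg_disj E₁ h₁'.1 E₂ h₂'.1 h₁'.2 h₂'.2 hne] at this
          exact hv10 (by simpa using this)
        · intro E' h'
          exact Set.toFinite _
        · intro E' h'
          have h'' : E' ∈ 𝓔 ∧ E' ≠ E := by simpa using h'
          rw [Set.ncard_diff_singleton_of_mem
            (show (0 : V ⧸ E) ∈ ((E'.map E.mkQ : Submodule F (V ⧸ E)) : Set (V ⧸ E)) from
              Submodule.zero_mem _), himg_card E' h''.1 h''.2]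
      rw [Set.ncard_union_eq hd (Set.toFinite _) (Set.toFinite _), hbu, hT'card,
        Set.ncard_univ, cardQ]
      have h1 : q ^ m * (q ^ n - 1) = q ^ m * q ^ n - q ^ m := by
        rcases Nat.exists_eq_add_of_le hqn1.le with ⟨k, hk⟩
        rw [hk, Nat.add_sub_cancel_left, Nat.mul_add, Nat.mul_one, Nat.add_sub_cancel_left]
      rw [h1, ← pow_add]
      have h2 : q ^ m ≤ q ^ (m + n) := Nat.pow_le_pow_right (by omega) (by omega)
      have h3 : q ^ (m + n) = q ^ (n + m) := by rw [Nat.add_comm]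
      omega
    intro v hvT hv0
    have hvU : v ∈ ((T.map E.mkQ : Submodule F (V ⧸ E)) : Set (V ⧸ E)) ∪
        (⋃ E' ∈ 𝓔 \ {E}, ((E'.map E.mkQ : Submodule F (V ⧸ E)) : Set (V ⧸ E)) \ {0}) := by
      rw [hU]; trivial
    rcases hvU with h | h
    · exact absurd h hvT
    · obtain ⟨E', hE', hv⟩ := Set.mem_iUnion₂.mp h
      obtain ⟨hv1, hv0⟩ := hv
      have h' : E' ∈ 𝓔 ∧ E' ≠ E := by simpa using hE'
      exact ⟨E', h'.1, h'.2, hv1⟩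
  -- main argument
  intro W3 hW3 hEW3 hexists
  obtain ⟨E₁, hE₁, E₂, hE₂, hE₁E, hE₂E, hE₁₂, hE₁W, hE₂W⟩ := hexists
  have hPdim : finrank F ↥(W3.map E.mkQ) = 2 * n := by
    have h := aux_finrank_map_add E.mkQ W3
    rw [Submodule.ker_mkQ, inf_eq_right.mpr hEW3] at h
    omega
  have hPcard : ((W3.map E.mkQ : Submodule F (V ⧸ E)) : Set (V ⧸ E)).ncard = q ^ (2 * n) := by
    rw [aux_card_submodule, hF, hPdim]
  obtain ⟨w₁, hw₁0, hw₁⟩ := hD_line _ (hmemD E₁ hE₁ hE₁E)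
  obtain ⟨w₂, hw₂0, hw₂⟩ := hD_line _ (hmemD E₂ hE₂ hE₂E)
  have hsupdim : finrank F ↥(E₁.map E.mkQ ⊔ E₂.map E.mkQ) = 2 * n := by
    have h := Submodule.finrank_sup_add_finrank_inf_eq (E₁.map E.mkQ) (E₂.map E.mkQ)
    rw [himg_disj E₁ hE₁ E₂ hE₂ hE₁E hE₂E hE₁₂, himg_dim E₁ hE₁ hE₁E,
      himg_dim E₂ hE₂ hE₂E, finrank_bot] at h
    omega
  have hPeq : E₁.map E.mkQ ⊔ E₂.map E.mkQ = W3.map E.mkQ :=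
    Submodule.eq_of_le_of_finrank_eq
      (sup_le (Submodule.map_mono hE₁W) (Submodule.map_mono hE₂W))
      (by rw [hsupdim, hPdim])
  have hPsmul : ∀ (c : fs.K) (v : V ⧸ E), v ∈ W3.map E.mkQ → c • v ∈ W3.map E.mkQ := by
    intro c v hv
    rw [← hPeq] at hv ⊢
    rcases Submodule.mem_sup.mp hv with ⟨a, ha, b, hb, rfl⟩
    have ha' : c • a ∈ E₁.map E.mkQ := by
      have hal : a ∈ fs.line w₁ := by rw [← hw₁]; exact ha
      obtain ⟨c₁, rfl⟩ := (hline_mem w₁ a).mp hal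
      rw [← SetLike.mem_coe, hw₁]
      exact (hline_mem w₁ _).mpr ⟨c * c₁, mul_smul c c₁ w₁⟩
    have hb' : c • b ∈ E₂.map E.mkQ := by
      have hbl : b ∈ fs.line w₂ := by rw [← hw₂]; exact hb
      obtain ⟨c₂, rfl⟩ := (hline_mem w₂ b).mp hbl
      rw [← SetLike.mem_coe, hw₂]
      exact (hline_mem w₂ _).mpr ⟨c * c₂, mul_smul c c₂ w₂⟩
    rw [smul_add]
    exact Submodule.mem_sup.mpr ⟨c • a, ha', c • b, hb', rfl⟩
  have hT'smul : ∀ (c : fs.K) (v : V ⧸ E), v ∈ T.map E.mkQ → c • v ∈ T.map E.mkQ := by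
    intro c v hv
    by_cases hv0 : v = 0
    · rw [hv0, smul_zero]; exact Submodule.zero_mem _
    by_cases hc0 : c = 0
    · rw [hc0, zero_smul]; exact Submodule.zero_mem _
    by_contra hout
    have hcv0 : c • v ≠ 0 := by
      intro h
      apply hv0
      rw [← hinv c v hc0, h, smul_zero]
    obtain ⟨E', hE'𝓔, hE'E, hmem⟩ := hcover (c • v) hout hcv0
    obtain ⟨w', hw'0, hw'⟩ := hD_line _ (hmemD E' hE'𝓔 hE'E)
    have h1 : c • v ∈ fs.line w' := by rw [← hw']; exact hmem
    obtain ⟨c', hc'⟩ := (hline_mem w' (c • v)).mp h1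
    have h2 : v ∈ fs.line w' :=
      (hline_mem w' v).mpr ⟨c⁻¹ * c', by rw [mul_smul, hc', hinv c v hc0]⟩
    have hvE' : v ∈ E'.map E.mkQ := by rw [← SetLike.mem_coe, hw']; exact h2
    have h3 : v ∈ (E'.map E.mkQ) ⊓ (T.map E.mkQ) := ⟨hvE', hv⟩
    rw [himg_disj_T E' hE'𝓔 hE'E] at h3
    exact hv0 (by simpa using h3)
  have hSdim_ge : n ≤ finrank F ↥(W3.map E.mkQ ⊓ T.map E.mkQ) := by
    have h := Submodule.finrank_sup_add_finrank_inf_eq (W3.map E.mkQ) (T.map E.mkQ)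
    have h2 : finrank F ↥(W3.map E.mkQ ⊔ T.map E.mkQ) ≤ n + m := by
      rw [← hQdim]; exact Submodule.finrank_le _
    rw [hPdim, hT'dim] at h
    omega
  let Ssub : Submodule fs.K (V ⧸ E) :=
    { carrier := ((W3.map E.mkQ ⊓ T.map E.mkQ : Submodule F (V ⧸ E)) : Set (V ⧸ E))
      add_mem' := fun ha hb => Submodule.add_mem _ ha hb
      zero_mem' := (W3.map E.mkQ ⊓ T.map E.mkQ).zero_mem
      smul_mem' := by
        intro c v hv
        have hv' := Submodule.mem_inf.mp hv
        exact Submodule.mem_inf.mpr ⟨hPsmul c v hv'.1, hT'smul c v hv'.2⟩ }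
  haveI : FiniteDimensional fs.K (V ⧸ E) := Module.finite_iff_finite.mpr inferInstance
  have hScard1 : ((W3.map E.mkQ ⊓ T.map E.mkQ : Submodule F (V ⧸ E)) : Set (V ⧸ E)).ncard
      = (q ^ n) ^ finrank fs.K ↥Ssub := by
    have h := aux_card_submodule (F := fs.K) Ssub
    rw [fs.card_K] at h
    exact h
  have hScard2 : ((W3.map E.mkQ ⊓ T.map E.mkQ : Submodule F (V ⧸ E)) : Set (V ⧸ E)).ncard
      = q ^ finrank F ↥(W3.map E.mkQ ⊓ T.map E.mkQ) := by
    rw [aux_card_submodule, hF]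
  have hfe : finrank F ↥(W3.map E.mkQ ⊓ T.map E.mkQ) = n * finrank fs.K ↥Ssub := by
    apply Nat.pow_right_injective hq2
    show q ^ _ = q ^ _
    rw [← hScard2, hScard1, ← pow_mul]
  have he_ge1 : 1 ≤ finrank fs.K ↥Ssub := by
    rcases Nat.eq_zero_or_pos (finrank fs.K ↥Ssub) with h | h
    · rw [h, Nat.mul_zero] at hfe
      omega
    · omega
  have hw₁M : w₁ ∈ E₁.map E.mkQ := by
    rw [← SetLike.mem_coe, hw₁]
    exact (hline_mem w₁ w₁).mpr ⟨1, one_smul _ _⟩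
  have he1 : finrank fs.K ↥Ssub = 1 := by
    by_contra hne
    have he2 : 2 ≤ finrank fs.K ↥Ssub := by omega
    have hSP : W3.map E.mkQ ⊓ T.map E.mkQ = W3.map E.mkQ := by
      apply Submodule.eq_of_le_of_finrank_le inf_le_left
      rw [hPdim, hfe]
      calc 2 * n = n * 2 := by ring
      _ ≤ n * finrank fs.K ↥Ssub := Nat.mul_le_mul_left n he2
    have hPT : W3.map E.mkQ ≤ T.map E.mkQ := by rw [← hSP]; exact inf_le_right
    have hw₁P : w₁ ∈ W3.map E.mkQ := by
      rw [← hPeq]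
      exact Submodule.mem_sup_left hw₁M
    have h3 : w₁ ∈ (E₁.map E.mkQ) ⊓ (T.map E.mkQ) := ⟨hw₁M, hPT hw₁P⟩
    rw [himg_disj_T E₁ hE₁ hE₁E] at h3
    exact hw₁0 (by simpa using h3)
  have hScard : ((W3.map E.mkQ ⊓ T.map E.mkQ : Submodule F (V ⧸ E)) : Set (V ⧸ E)).ncard
      = q ^ n := by
    rw [hScard2, hfe, he1, Nat.mul_one]
  -- the set of egg elements in W3 other than E
  have hXeq : ((W3.map E.mkQ : Submodule F (V ⧸ E)) : Set (V ⧸ E)) \ ((T.map E.mkQ : Submodule F (V ⧸ E)) : Set (V ⧸ E))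
      = ⋃ E' ∈ {E' | E' ∈ 𝓔 ∧ E' ≠ E ∧ E' ≤ W3},
          ((E'.map E.mkQ : Submodule F (V ⧸ E)) : Set (V ⧸ E)) \ {0} := by
    apply Set.Subset.antisymm
    · rintro v ⟨hvP, hvT⟩
      have hv0 : v ≠ 0 := fun h => hvT (h ▸ Submodule.zero_mem _)
      obtain ⟨E', hE'𝓔, hE'E, hvE'⟩ := hcover v hvT hv0
      obtain ⟨w', hw'0, hw'⟩ := hD_line _ (hmemD E' hE'𝓔 hE'E)
      have hvline : v ∈ fs.line w' := by rw [← hw']; exact hvE'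
      obtain ⟨c, hc⟩ := (hline_mem w' v).mp hvline
      have hc0 : c ≠ 0 := fun h => hv0 (by rw [← hc, h, zero_smul])
      have hw'P : w' ∈ W3.map E.mkQ := by
        have hww : w' = c⁻¹ • v := by rw [← hc, hinv c w' hc0]
        rw [hww]
        exact hPsmul _ _ hvP
      have hlineP : ∀ u ∈ fs.line w', u ∈ W3.map E.mkQ := by
        intro u hu
        obtain ⟨c'', rfl⟩ := (hline_mem w' u).mp hu
        exact hPsmul _ _ hw'P
      have hE'W : E' ≤ W3 := by
        intro x hx
        have hxP : E.mkQ x ∈ W3.map E.mkQ := by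
          apply hlineP
          rw [← hw']
          exact SetLike.mem_coe.mpr ⟨x, hx, rfl⟩
        obtain ⟨y, hy, hxy⟩ := hxP
        have hxyE : x - y ∈ E := by
          rw [← Submodule.ker_mkQ E, LinearMap.mem_ker, map_sub, hxy, sub_self]
        have hxx : x = (x - y) + y := (sub_add_cancel x y).symm
        rw [hxx]
        exact W3.add_mem (hEW3 hxyE) hy
      exact Set.mem_biUnion ⟨hE'𝓔, hE'E, hE'W⟩ ⟨hvE', by simp [hv0]⟩
    · intro v hv
      obtain ⟨E', hE'G, hvm⟩ := Set.mem_iUnion₂.mp hv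
      obtain ⟨hv1, hv0⟩ := hvm
      refine ⟨Submodule.map_mono hE'G.2.2 hv1, ?_⟩
      intro hvT
      have h3 : v ∈ (E'.map E.mkQ) ⊓ (T.map E.mkQ) := ⟨hv1, hvT⟩
      rw [himg_disj_T E' hE'G.1 hE'G.2.1] at h3
      exact hv0 (by simpa using h3)
  have hcnt : (((W3.map E.mkQ : Submodule F (V ⧸ E)) : Set (V ⧸ E)) \ ((T.map E.mkQ : Submodule F (V ⧸ E)) : Set (V ⧸ E))).ncard
      = {E' | E' ∈ 𝓔 ∧ E' ≠ E ∧ E' ≤ W3}.ncard * (q ^ n - 1) := by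
    rw [hXeq]
    apply aux_ncard_biUnion (Set.toFinite _)
    · intro E₁' h₁ E₂' h₂ hne
      rw [Set.disjoint_left]
      rintro v ⟨hv1, hv10⟩ ⟨hv2, _⟩
      have h3 : v ∈ (E₁'.map E.mkQ) ⊓ (E₂'.map E.mkQ) := ⟨hv1, hv2⟩
      rw [himg_disj E₁' h₁.1 E₂' h₂.1 h₁.2.1 h₂.2.1 hne] at h3
      exact hv10 (by simpa using h3)
    · intro E' h'
      exact Set.toFinite _
    · intro E' h'
      rw [Set.ncard_diff_singleton_of_mem
        (show (0 : V ⧸ E) ∈ ((E'.map E.mkQ : Submodule F (V ⧸ E)) : Set (V ⧸ E)) from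
          Submodule.zero_mem _), himg_card E' h'.1 h'.2.1]
  have hsum := Set.ncard_inter_add_ncard_diff_eq_ncard
    ((W3.map E.mkQ : Submodule F (V ⧸ E)) : Set (V ⧸ E))
    ((T.map E.mkQ : Submodule F (V ⧸ E)) : Set (V ⧸ E)) (Set.toFinite _)
  have hco : (((W3.map E.mkQ : Submodule F (V ⧸ E)) : Set (V ⧸ E)) ∩
      ((T.map E.mkQ : Submodule F (V ⧸ E)) : Set (V ⧸ E)))
      = ((W3.map E.mkQ ⊓ T.map E.mkQ : Submodule F (V ⧸ E)) : Set (V ⧸ E)) := rfl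
  rw [hco, hScard, hcnt, hPcard] at hsum
  have e2 : q ^ n + q ^ n * (q ^ n - 1) = q ^ (2 * n) := by
    have e3 : q ^ n * (1 + (q ^ n - 1)) = q ^ (2 * n) := by
      rw [Nat.add_sub_cancel' hqn1.le, two_mul, pow_add]
    rw [← e3, Nat.mul_add, Nat.mul_one]
  have hGcard : {E' | E' ∈ 𝓔 ∧ E' ≠ E ∧ E' ≤ W3}.ncard = q ^ n := by
    have e4 : {E' | E' ∈ 𝓔 ∧ E' ≠ E ∧ E' ≤ W3}.ncard * (q ^ n - 1)
        = q ^ n * (q ^ n - 1) := by omega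
    exact Nat.eq_of_mul_eq_mul_right (by omega) e4
  have hfinal : {E' ∈ 𝓔 | E' ≤ W3} = insert E {E' | E' ∈ 𝓔 ∧ E' ≠ E ∧ E' ≤ W3} := by
    ext X
    simp only [Set.mem_insert_iff, Set.mem_setOf_eq, Set.mem_sep_iff]
    constructor
    · rintro ⟨h1, h2⟩
      by_cases hXE : X = E
      · exact Or.inl hXE
      · exact Or.inr ⟨h1, hXE, h2⟩
    · rintro (rfl | ⟨h1, h2, h3⟩)
      · exact ⟨hE, hEW3⟩
      · exact ⟨h1, h3⟩
  rw [hfinal, Set.ncard_insert_of_notMem (fun h => h.2.1 rfl) (Set.toFinite _), hGcard]
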